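/- Let N ≥ 1, m_α, m_α* > 0, e_α ∈ ℝ. For solutions (r(t), u(t)) of the third-order effective system d/dt(∂L_D/∂u_α) = ∂L_D/∂r_α + (e_α/6π) ∑_{β=1}^N e_β ü_β (α = 1,…,N), where L_D is the Darwin Lagrangian, the modified energy H_RR(r, u, u̇) = H_D(r, u) − ∑_{α,β} (e_α e_β/6π) u_α·u̇_β satisfies d/dt H_RR = −(1/6π) (∑_{α=1}^N e_α u̇_α)². In particular H_RR is nonincreasing along solutions. -/

import Mathlib

open Finset

noncomputable section RRaux
set_option linter.unusedSectionVars false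

variable {E : Type*} [NormedAddCommGroup E] [InnerProductSpace ℝ E] [CompleteSpace E] {N : ℕ}

lemma RR_inner_gradient_eq {f : E → ℝ} {x : E} {D : E →L[ℝ] ℝ} (h : HasFDerivAt f D x) (w : E) :
    (inner ℝ (gradient f x) w : ℝ) = D w := by
  rw [gradient, h.fderiv, InnerProductSpace.toDual_symm_apply]

/-- single-coordinate inclusion as a CLM -/
def RRsngl (α : Fin N) : E →L[ℝ] (Fin N → E) :=
  ContinuousLinearMap.pi (fun β => if β = α then ContinuousLinearMap.id ℝ E else 0)

lemma RRsngl_apply (α : Fin N) (x : E) : RRsngl α x = Pi.single α x := by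
  funext β
  simp [RRsngl, ContinuousLinearMap.pi_apply, Pi.single_apply]
  split <;> simp

lemma RR_pi_eq_sum_single (f : Fin N → E) : f = ∑ i, Pi.single i (f i) := by
  funext j
  simp [Finset.sum_apply, Pi.single_apply]

lemma RR_grad_update_snd {F : ((Fin N → E) × (Fin N → E)) → ℝ} {a b : Fin N → E}
    (hF : DifferentiableAt ℝ F (a, b)) (α : Fin N) (c : E) :
    (inner ℝ (gradient (fun w => F (a, Function.update b α w)) (b α)) c : ℝ)
      = fderiv ℝ F (a, b) (0, Pi.single α c) := by
  classical
  set ι : E →L[ℝ] ((Fin N → E) × (Fin N → E)) :=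
    ContinuousLinearMap.prod 0 (RRsngl α) with hιdef
  have hι : ∀ v : E, ι v = (0, Pi.single α v) := by
    intro v
    simp [hιdef, ContinuousLinearMap.prod_apply, RRsngl_apply]
  have key : (fun w : E => ((a, Function.update b α w) : (Fin N → E) × (Fin N → E)))
      = fun w => ((a, b) - ι (b α)) + ι w := by
    funext w
    refine Prod.ext ?_ ?_
    · simp [hι]
    · funext β
      by_cases h : β = α <;>
        simp [hι, Function.update_apply, Pi.single_apply, h]
  have hA : HasFDerivAt (fun w : E => ((a, Function.update b α w) : (Fin N → E) × (Fin N → E)))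
      ι (b α) := by
    rw [key]
    exact (ι.hasFDerivAt).const_add _
  have h0 : ((a, Function.update b α (b α)) : (Fin N → E) × (Fin N → E)) = (a, b) := by
    rw [Function.update_eq_self]
  have hcomp : HasFDerivAt (fun w : E => F (a, Function.update b α w))
      ((fderiv ℝ F (a, b)).comp ι) (b α) :=
    HasFDerivAt.comp (b α) (h0 ▸ hF.hasFDerivAt) hA
  rw [RR_inner_gradient_eq hcomp c]
  simp [hι]

lemma RR_grad_update_fst {F : ((Fin N → E) × (Fin N → E)) → ℝ} {a b : Fin N → E}
    (hF : DifferentiableAt ℝ F (a, b)) (α : Fin N) (c : E) :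
    (inner ℝ (gradient (fun w => F (Function.update a α w, b)) (a α)) c : ℝ)
      = fderiv ℝ F (a, b) (Pi.single α c, 0) := by
  classical
  set ι : E →L[ℝ] ((Fin N → E) × (Fin N → E)) :=
    ContinuousLinearMap.prod (RRsngl α) 0 with hιdef
  have hι : ∀ v : E, ι v = (Pi.single α v, 0) := by
    intro v
    simp [hιdef, ContinuousLinearMap.prod_apply, RRsngl_apply]
  have key : (fun w : E => ((Function.update a α w, b) : (Fin N → E) × (Fin N → E)))
      = fun w => ((a, b) - ι (a α)) + ι w := by
    funext w
    refine Prod.ext ?_ ?_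
    · funext β
      by_cases h : β = α <;>
        simp [hι, Function.update_apply, Pi.single_apply, h]
    · simp [hι]
  have hA : HasFDerivAt (fun w : E => ((Function.update a α w, b) : (Fin N → E) × (Fin N → E)))
      ι (a α) := by
    rw [key]
    exact (ι.hasFDerivAt).const_add _
  have h0 : ((Function.update a α (a α), b) : (Fin N → E) × (Fin N → E)) = (a, b) := by
    rw [Function.update_eq_self]
  have hcomp : HasFDerivAt (fun w : E => F (Function.update a α w, b))
      ((fderiv ℝ F (a, b)).comp ι) (a α) :=
    HasFDerivAt.comp (a α) (h0 ▸ hF.hasFDerivAt) hA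
  rw [RR_inner_gradient_eq hcomp c]
  simp [hι]

lemma RR_fderiv_decomp {F : ((Fin N → E) × (Fin N → E)) → ℝ} {q : (Fin N → E) × (Fin N → E)}
    (a b : Fin N → E) :
    fderiv ℝ F q (a, b) = ∑ α, fderiv ℝ F q (Pi.single α (a α), 0)
      + ∑ α, fderiv ℝ F q (0, Pi.single α (b α)) := by
  have hab : ((a, b) : (Fin N → E) × (Fin N → E))
      = (∑ α, ((Pi.single α (a α), 0) : (Fin N → E) × (Fin N → E)))
        + ∑ α, ((0, Pi.single α (b α)) : (Fin N → E) × (Fin N → E)) := by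
    refine Prod.ext ?_ ?_ <;>
      simp [Prod.fst_sum, Prod.snd_sum, ← RR_pi_eq_sum_single]
  rw [hab, map_add, map_sum, map_sum]

lemma RR_formula_diff (m mstar e : Fin N → ℝ)
    {a b : Fin N → E} (hsep : ∀ α β : Fin N, α ≠ β → a α ≠ a β) :
    DifferentiableAt ℝ (fun p : (Fin N → E) × (Fin N → E) =>
      (∑ α, ((1 / 2) * m α * ‖p.2 α‖ ^ 2 + (1 / 8) * mstar α * ‖p.2 α‖ ^ 4))
      - (1 / 2) * (∑ α, ∑ β ∈ Finset.univ.erase α,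
          e α * e β / (4 * Real.pi * ‖p.1 α - p.1 β‖))
      + (1 / 4) * (∑ α, ∑ β ∈ Finset.univ.erase α,
          (e α * e β / (4 * Real.pi * ‖p.1 α - p.1 β‖)) *
            ((inner ℝ (p.2 α) (p.2 β) : ℝ) +
              (‖p.1 α - p.1 β‖ ^ 2)⁻¹ * (inner ℝ (p.2 α) (p.1 α - p.1 β) : ℝ) *
                (inner ℝ (p.2 β) (p.1 α - p.1 β) : ℝ)))) (a, b) := by
  classical
  have h1 : ∀ α : Fin N, DifferentiableAt ℝ
      (fun p : (Fin N → E) × (Fin N → E) => p.1 α) (a, b) := fun α =>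
    (((ContinuousLinearMap.proj α : (Fin N → E) →L[ℝ] E).comp
      (ContinuousLinearMap.fst ℝ (Fin N → E) (Fin N → E)))).differentiableAt
  have h2 : ∀ α : Fin N, DifferentiableAt ℝ
      (fun p : (Fin N → E) × (Fin N → E) => p.2 α) (a, b) := fun α =>
    (((ContinuousLinearMap.proj α : (Fin N → E) →L[ℝ] E).comp
      (ContinuousLinearMap.snd ℝ (Fin N → E) (Fin N → E)))).differentiableAt
  have hd : ∀ α β : Fin N, DifferentiableAt ℝ
      (fun p : (Fin N → E) × (Fin N → E) => p.1 α - p.1 β) (a, b) := fun α β =>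
    (h1 α).sub (h1 β)
  have hπ : (0:ℝ) < Real.pi := Real.pi_pos
  simp only [div_eq_mul_inv]
  refine DifferentiableAt.add (DifferentiableAt.sub ?_ ?_) ?_
  · refine DifferentiableAt.fun_sum (fun α _ => DifferentiableAt.add ?_ ?_)
    · exact (differentiableAt_const _).mul ((h2 α).norm_sq ℝ)
    · have h4 : DifferentiableAt ℝ
          (fun p : (Fin N → E) × (Fin N → E) => ‖p.2 α‖ ^ 4) (a, b) := by
        have h := ((h2 α).norm_sq ℝ).fun_pow 2
        simpa [← pow_mul] using h
      exact (differentiableAt_const _).mul h4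
  · refine (differentiableAt_const _).mul ?_
    refine DifferentiableAt.fun_sum (fun α _ => DifferentiableAt.fun_sum (fun β hβ => ?_))
    have hab : a α - a β ≠ 0 :=
      sub_ne_zero.2 (hsep α β (Finset.ne_of_mem_erase hβ).symm)
    have hnorm := (hd α β).norm ℝ hab
    have hnz : ‖a α - a β‖ ≠ 0 := norm_ne_zero_iff.2 hab
    have hden : DifferentiableAt ℝ
        (fun p : (Fin N → E) × (Fin N → E) => 4 * Real.pi * ‖p.1 α - p.1 β‖) (a, b) :=
      (differentiableAt_const _).mul hnorm
    exact (differentiableAt_const (e α * e β)).mul (hden.inv (by positivity))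
  · refine (differentiableAt_const _).mul ?_
    refine DifferentiableAt.fun_sum (fun α _ => DifferentiableAt.fun_sum (fun β hβ => ?_))
    have hab : a α - a β ≠ 0 :=
      sub_ne_zero.2 (hsep α β (Finset.ne_of_mem_erase hβ).symm)
    have hnorm := (hd α β).norm ℝ hab
    have hnz : ‖a α - a β‖ ≠ 0 := norm_ne_zero_iff.2 hab
    have hk : DifferentiableAt ℝ
        (fun p : (Fin N → E) × (Fin N → E) =>
          e α * e β * (4 * Real.pi * ‖p.1 α - p.1 β‖)⁻¹) (a, b) := by
      have hden : DifferentiableAt ℝ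
          (fun p : (Fin N → E) × (Fin N → E) => 4 * Real.pi * ‖p.1 α - p.1 β‖) (a, b) :=
        (differentiableAt_const _).mul hnorm
      exact (differentiableAt_const (e α * e β)).mul (hden.inv (by positivity))
    refine hk.mul (DifferentiableAt.add ?_ ?_)
    · exact (h2 α).inner ℝ (h2 β)
    · refine DifferentiableAt.mul (DifferentiableAt.mul ?_ ?_) ?_
      · exact DifferentiableAt.inv ((hd α β).norm_sq ℝ) (by positivity)
      · exact (h2 α).inner ℝ (hd α β)
      · exact (h2 β).inner ℝ (hd α β)

end RRaux

theorem radiation_reaction_energy_dissipation (N : ℕ)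
    (m mstar e : Fin N → ℝ) (hm : ∀ α, 0 < m α) (hmstar : ∀ α, 0 < mstar α)
    (r u u' u'' : ℝ → Fin N → EuclideanSpace ℝ (Fin 3))
    (L HD : (Fin N → EuclideanSpace ℝ (Fin 3)) →
      (Fin N → EuclideanSpace ℝ (Fin 3)) → ℝ)
    (hL : ∀ rr uu, L rr uu =
      (∑ α, ((1 / 2) * m α * ‖uu α‖ ^ 2 + (1 / 8) * mstar α * ‖uu α‖ ^ 4))
      - (1 / 2) * (∑ α, ∑ β ∈ Finset.univ.erase α,
          e α * e β / (4 * Real.pi * ‖rr α - rr β‖))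
      + (1 / 4) * (∑ α, ∑ β ∈ Finset.univ.erase α,
          (e α * e β / (4 * Real.pi * ‖rr α - rr β‖)) *
            ((inner ℝ (uu α) (uu β) : ℝ) +
              (‖rr α - rr β‖ ^ 2)⁻¹ * (inner ℝ (uu α) (rr α - rr β) : ℝ) *
                (inner ℝ (uu β) (rr α - rr β) : ℝ))))
    (hHD : ∀ rr uu, HD rr uu =
      (∑ α, ((1 / 2) * m α * ‖uu α‖ ^ 2 + (3 / 8) * mstar α * ‖uu α‖ ^ 4))
      + (1 / 2) * (∑ α, ∑ β ∈ Finset.univ.erase α,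
          e α * e β / (4 * Real.pi * ‖rr α - rr β‖))
      + (1 / 4) * (∑ α, ∑ β ∈ Finset.univ.erase α,
          (e α * e β / (4 * Real.pi * ‖rr α - rr β‖)) *
            ((inner ℝ (uu α) (uu β) : ℝ) +
              (‖rr α - rr β‖ ^ 2)⁻¹ * (inner ℝ (uu α) (rr α - rr β) : ℝ) *
                (inner ℝ (uu β) (rr α - rr β) : ℝ))))
    (hsep : ∀ t : ℝ, ∀ α β, α ≠ β → r t α ≠ r t β)
    (hr : ∀ t α, HasDerivAt (fun s => r s α) (u t α) t)
    (hu : ∀ t α, HasDerivAt (fun s => u s α) (u' t α) t)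
    (hu' : ∀ t α, HasDerivAt (fun s => u' s α) (u'' t α) t)
    (hEOM : ∀ t α, HasDerivAt
      (fun s => gradient (fun w => L (r s) (Function.update (u s) α w)) (u s α))
      (gradient (fun w => L (Function.update (r t) α w) (u t)) (r t α) +
        (e α / (6 * Real.pi)) • ∑ β, e β • u'' t β) t) :
    ∀ t : ℝ, HasDerivAt
      (fun s => HD (r s) (u s) -
        ∑ α, ∑ β, (e α * e β / (6 * Real.pi)) * (inner ℝ (u s α) (u' s β) : ℝ))
      (-(1 / (6 * Real.pi)) * ‖∑ α, e α • u' t α‖ ^ 2) t := by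
  classical
  intro t
  -- differentiability of the uncurried Lagrangian
  have hFdiff : ∀ s : ℝ, DifferentiableAt ℝ
      (fun p : (Fin N → EuclideanSpace ℝ (Fin 3)) × (Fin N → EuclideanSpace ℝ (Fin 3)) =>
        L p.1 p.2) (r s, u s) := by
    intro s
    have hFeq : (fun p : (Fin N → EuclideanSpace ℝ (Fin 3)) ×
        (Fin N → EuclideanSpace ℝ (Fin 3)) => L p.1 p.2)
        = fun p => (∑ α, ((1 / 2) * m α * ‖p.2 α‖ ^ 2 + (1 / 8) * mstar α * ‖p.2 α‖ ^ 4))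
          - (1 / 2) * (∑ α, ∑ β ∈ Finset.univ.erase α,
              e α * e β / (4 * Real.pi * ‖p.1 α - p.1 β‖))
          + (1 / 4) * (∑ α, ∑ β ∈ Finset.univ.erase α,
              (e α * e β / (4 * Real.pi * ‖p.1 α - p.1 β‖)) *
                ((inner ℝ (p.2 α) (p.2 β) : ℝ) +
                  (‖p.1 α - p.1 β‖ ^ 2)⁻¹ * (inner ℝ (p.2 α) (p.1 α - p.1 β) : ℝ) *
                    (inner ℝ (p.2 β) (p.1 α - p.1 β) : ℝ))) :=
      funext fun p => hL p.1 p.2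
    rw [hFeq]
    exact RR_formula_diff m mstar e (hsep s)
  -- inner products with partial gradients
  have hPinner : ∀ s (α : Fin N) (c : EuclideanSpace ℝ (Fin 3)),
      (inner ℝ (gradient (fun w => L (r s) (Function.update (u s) α w)) (u s α)) c : ℝ)
        = fderiv ℝ (fun p : (Fin N → EuclideanSpace ℝ (Fin 3)) ×
            (Fin N → EuclideanSpace ℝ (Fin 3)) => L p.1 p.2) (r s, u s) (0, Pi.single α c) :=
    fun s α c => RR_grad_update_snd (hFdiff s) α c
  have hGinner : ∀ s (α : Fin N) (c : EuclideanSpace ℝ (Fin 3)),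
      (inner ℝ (gradient (fun w => L (Function.update (r s) α w) (u s)) (r s α)) c : ℝ)
        = fderiv ℝ (fun p : (Fin N → EuclideanSpace ℝ (Fin 3)) ×
            (Fin N → EuclideanSpace ℝ (Fin 3)) => L p.1 p.2) (r s, u s) (Pi.single α c, 0) :=
    fun s α c => RR_grad_update_fst (hFdiff s) α c
  -- the Euler/Legendre identity
  have hIdent : ∀ s : ℝ, HD (r s) (u s) + L (r s) (u s)
      = ∑ α, (inner ℝ (u s α)
          (gradient (fun w => L (r s) (Function.update (u s) α w)) (u s α)) : ℝ) := by
    intro s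
    have e1 : (∑ α, ((1 / 2) * m α * ‖u s α‖ ^ 2 + (3 / 8) * mstar α * ‖u s α‖ ^ 4))
        = (1 / 2) * (∑ α, m α * ‖u s α‖ ^ 2) + (3 / 8) * (∑ α, mstar α * ‖u s α‖ ^ 4) := by
      rw [Finset.sum_add_distrib, Finset.mul_sum, Finset.mul_sum]
      congr 1 <;> exact Finset.sum_congr rfl fun α _ => by ring
    have e2 : (∑ α, ((1 / 2) * m α * ‖u s α‖ ^ 2 + (1 / 8) * mstar α * ‖u s α‖ ^ 4))
        = (1 / 2) * (∑ α, m α * ‖u s α‖ ^ 2) + (1 / 8) * (∑ α, mstar α * ‖u s α‖ ^ 4) := by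
      rw [Finset.sum_add_distrib, Finset.mul_sum, Finset.mul_sum]
      congr 1 <;> exact Finset.sum_congr rfl fun α _ => by ring
    have stepA : HD (r s) (u s) + L (r s) (u s)
        = 2 * ((1 / 2) * (∑ α, m α * ‖u s α‖ ^ 2)
            + (1 / 4) * (∑ α, ∑ β ∈ Finset.univ.erase α,
                (e α * e β / (4 * Real.pi * ‖r s α - r s β‖)) *
                  ((inner ℝ (u s α) (u s β) : ℝ) +
                    (‖r s α - r s β‖ ^ 2)⁻¹ * (inner ℝ (u s α) (r s α - r s β) : ℝ) *
                      (inner ℝ (u s β) (r s α - r s β) : ℝ))))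
          + 4 * ((1 / 8) * (∑ α, mstar α * ‖u s α‖ ^ 4)) := by
      rw [hHD, hL, e1, e2]; ring
    have hterm : ∀ (ε : ℝ) (α : Fin N),
        (1 / 2) * m α * ‖(1 + ε) • u s α‖ ^ 2 + (1 / 8) * mstar α * ‖(1 + ε) • u s α‖ ^ 4
          = (1 + ε) ^ 2 * ((1 / 2) * (m α * ‖u s α‖ ^ 2))
            + (1 + ε) ^ 4 * ((1 / 8) * (mstar α * ‖u s α‖ ^ 4)) := by
      intro ε α
      have habs : |1 + ε| ^ 4 = (1 + ε) ^ 4 := by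
        rw [← abs_pow]; exact abs_of_nonneg (by positivity)
      rw [norm_smul, Real.norm_eq_abs, mul_pow, mul_pow, sq_abs, habs]; ring
    have hterm2 : ∀ (ε : ℝ) (α β : Fin N),
        (e α * e β / (4 * Real.pi * ‖r s α - r s β‖)) *
            ((inner ℝ ((1 + ε) • u s α) ((1 + ε) • u s β) : ℝ) +
              (‖r s α - r s β‖ ^ 2)⁻¹ * (inner ℝ ((1 + ε) • u s α) (r s α - r s β) : ℝ) *
                (inner ℝ ((1 + ε) • u s β) (r s α - r s β) : ℝ))
          = (1 + ε) ^ 2 * ((e α * e β / (4 * Real.pi * ‖r s α - r s β‖)) *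
              ((inner ℝ (u s α) (u s β) : ℝ) +
                (‖r s α - r s β‖ ^ 2)⁻¹ * (inner ℝ (u s α) (r s α - r s β) : ℝ) *
                  (inner ℝ (u s β) (r s α - r s β) : ℝ))) := by
      intro ε α β
      simp only [real_inner_smul_left, real_inner_smul_right]
      ring
    have hgpoly : ∀ ε : ℝ, L (r s) (fun α => (1 + ε) • u s α)
        = (-(1 / 2)) * (∑ α, ∑ β ∈ Finset.univ.erase α,
              e α * e β / (4 * Real.pi * ‖r s α - r s β‖))
          + (1 + ε) ^ 2 * ((1 / 2) * (∑ α, m α * ‖u s α‖ ^ 2)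
              + (1 / 4) * (∑ α, ∑ β ∈ Finset.univ.erase α,
                  (e α * e β / (4 * Real.pi * ‖r s α - r s β‖)) *
                    ((inner ℝ (u s α) (u s β) : ℝ) +
                      (‖r s α - r s β‖ ^ 2)⁻¹ * (inner ℝ (u s α) (r s α - r s β) : ℝ) *
                        (inner ℝ (u s β) (r s α - r s β) : ℝ))))
          + (1 + ε) ^ 4 * ((1 / 8) * (∑ α, mstar α * ‖u s α‖ ^ 4)) := by
      intro ε
      simp only [hL]
      have hsum1 := Finset.sum_congr rfl fun α (_ : α ∈ (Finset.univ : Finset (Fin N))) =>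
        hterm ε α
      have hsum2 := Finset.sum_congr rfl fun α (_ : α ∈ (Finset.univ : Finset (Fin N))) =>
        Finset.sum_congr rfl fun β (_ : β ∈ Finset.univ.erase α) => hterm2 ε α β
      rw [hsum1, hsum2]
      simp only [Finset.sum_add_distrib, ← Finset.mul_sum]
      ring
    have h1 : HasDerivAt (fun ε : ℝ => 1 + ε) 1 0 := by
      simpa using (hasDerivAt_id (0 : ℝ)).const_add (1 : ℝ)
    have hg1 : HasDerivAt (fun ε : ℝ => L (r s) (fun α => (1 + ε) • u s α))
        (2 * ((1 / 2) * (∑ α, m α * ‖u s α‖ ^ 2)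
            + (1 / 4) * (∑ α, ∑ β ∈ Finset.univ.erase α,
                (e α * e β / (4 * Real.pi * ‖r s α - r s β‖)) *
                  ((inner ℝ (u s α) (u s β) : ℝ) +
                    (‖r s α - r s β‖ ^ 2)⁻¹ * (inner ℝ (u s α) (r s α - r s β) : ℝ) *
                      (inner ℝ (u s β) (r s α - r s β) : ℝ))))
          + 4 * ((1 / 8) * (∑ α, mstar α * ‖u s α‖ ^ 4))) 0 := by
      rw [funext hgpoly]
      have h2 := (h1.pow 2).mul_const ((1 / 2) * (∑ α, m α * ‖u s α‖ ^ 2)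
          + (1 / 4) * (∑ α, ∑ β ∈ Finset.univ.erase α,
              (e α * e β / (4 * Real.pi * ‖r s α - r s β‖)) *
                ((inner ℝ (u s α) (u s β) : ℝ) +
                  (‖r s α - r s β‖ ^ 2)⁻¹ * (inner ℝ (u s α) (r s α - r s β) : ℝ) *
                    (inner ℝ (u s β) (r s α - r s β) : ℝ))))
      have h4 := (h1.pow 4).mul_const ((1 / 8) * (∑ α, mstar α * ‖u s α‖ ^ 4))
      have hcomb := ((hasDerivAt_const (0 : ℝ)
        ((-(1 / 2)) * (∑ α, ∑ β ∈ Finset.univ.erase α,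
            e α * e β / (4 * Real.pi * ‖r s α - r s β‖)))).add h2).add h4
      refine hcomb.congr_deriv ?_
      norm_num
    have hcomp : HasDerivAt (fun ε : ℝ => ((r s, fun α => (1 + ε) • u s α) :
        (Fin N → EuclideanSpace ℝ (Fin 3)) × (Fin N → EuclideanSpace ℝ (Fin 3))))
        ((0 : Fin N → EuclideanSpace ℝ (Fin 3)), u s) 0 :=
      (hasDerivAt_const (0 : ℝ) (r s)).prodMk
        (hasDerivAt_pi.2 fun α => by simpa using h1.smul_const (u s α))
    have hpt : (fun ε : ℝ => ((r s, fun α => (1 + ε) • u s α) :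
        (Fin N → EuclideanSpace ℝ (Fin 3)) × (Fin N → EuclideanSpace ℝ (Fin 3)))) 0
        = (r s, u s) := by
      refine Prod.ext rfl (funext fun α => ?_)
      show (1 + (0 : ℝ)) • u s α = u s α
      norm_num
    have hg2 : HasDerivAt (fun ε : ℝ => L (r s) (fun α => (1 + ε) • u s α))
        (fderiv ℝ (fun p : (Fin N → EuclideanSpace ℝ (Fin 3)) ×
          (Fin N → EuclideanSpace ℝ (Fin 3)) => L p.1 p.2) (r s, u s)
          ((0 : Fin N → EuclideanSpace ℝ (Fin 3)), u s)) 0 :=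
      HasFDerivAt.comp_hasDerivAt_of_eq (hl := (hFdiff s).hasFDerivAt)
        (hf := hcomp) (hy := hpt.symm)
    have huniq := hg1.unique hg2
    have hdec0 : fderiv ℝ (fun p : (Fin N → EuclideanSpace ℝ (Fin 3)) ×
        (Fin N → EuclideanSpace ℝ (Fin 3)) => L p.1 p.2) (r s, u s)
          ((0 : Fin N → EuclideanSpace ℝ (Fin 3)), u s)
        = ∑ α, fderiv ℝ (fun p : (Fin N → EuclideanSpace ℝ (Fin 3)) ×
            (Fin N → EuclideanSpace ℝ (Fin 3)) => L p.1 p.2) (r s, u s)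
            (0, Pi.single α (u s α)) := by
      have h := RR_fderiv_decomp
        (F := fun p : (Fin N → EuclideanSpace ℝ (Fin 3)) ×
          (Fin N → EuclideanSpace ℝ (Fin 3)) => L p.1 p.2)
        (q := (r s, u s)) (0 : Fin N → EuclideanSpace ℝ (Fin 3)) (u s)
      simpa [Prod.mk_zero_zero] using h
    rw [stepA, huniq, hdec0]
    exact Finset.sum_congr rfl fun α _ => by
      rw [← hPinner s α (u s α), real_inner_comm]
  -- derivative of L along the trajectory
  have hcurve : HasDerivAt (fun s => ((r s, u s) :
      (Fin N → EuclideanSpace ℝ (Fin 3)) × (Fin N → EuclideanSpace ℝ (Fin 3))))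
      (u t, u' t) t :=
    (hasDerivAt_pi.2 (hr t)).prodMk (hasDerivAt_pi.2 (hu t))
  have hLt : HasDerivAt (fun s => L (r s) (u s))
      (fderiv ℝ (fun p : (Fin N → EuclideanSpace ℝ (Fin 3)) ×
        (Fin N → EuclideanSpace ℝ (Fin 3)) => L p.1 p.2) (r t, u t) (u t, u' t)) t :=
    (((hFdiff t).hasFDerivAt).comp_hasDerivAt t hcurve :)
  -- derivative of the Legendre sum
  have hS : HasDerivAt (fun s => ∑ α, (inner ℝ (u s α)
        (gradient (fun w => L (r s) (Function.update (u s) α w)) (u s α)) : ℝ))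
      (∑ α, ((inner ℝ (u t α)
          (gradient (fun w => L (Function.update (r t) α w) (u t)) (r t α) +
            (e α / (6 * Real.pi)) • ∑ β, e β • u'' t β) : ℝ)
        + (inner ℝ (u' t α)
            (gradient (fun w => L (r t) (Function.update (u t) α w)) (u t α)) : ℝ))) t :=
    HasDerivAt.fun_sum fun α _ => HasDerivAt.inner ℝ (hu t α) (hEOM t α)
  -- derivative of the radiation term
  have hR : HasDerivAt (fun s => ∑ α, ∑ β,
        (e α * e β / (6 * Real.pi)) * (inner ℝ (u s α) (u' s β) : ℝ))
      (∑ α, ∑ β, (e α * e β / (6 * Real.pi)) *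
        ((inner ℝ (u t α) (u'' t β) : ℝ) + (inner ℝ (u' t α) (u' t β) : ℝ))) t :=
    HasDerivAt.fun_sum fun α _ => HasDerivAt.fun_sum fun β _ =>
      HasDerivAt.const_mul _ (HasDerivAt.inner ℝ (hu t α) (hu' t β))
  -- assemble
  have hfun : (fun s => HD (r s) (u s) -
        ∑ α, ∑ β, (e α * e β / (6 * Real.pi)) * (inner ℝ (u s α) (u' s β) : ℝ))
      = (fun s => ((∑ α, (inner ℝ (u s α)
          (gradient (fun w => L (r s) (Function.update (u s) α w)) (u s α)) : ℝ))
            - L (r s) (u s))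
        - ∑ α, ∑ β, (e α * e β / (6 * Real.pi)) * (inner ℝ (u s α) (u' s β) : ℝ)) := by
    funext s
    rw [sub_left_inj]
    exact eq_sub_of_add_eq (hIdent s)
  have hbig := (hS.sub hLt).sub hR
  rw [hfun]
  refine hbig.congr_deriv ?_
  have hDval : fderiv ℝ (fun p : (Fin N → EuclideanSpace ℝ (Fin 3)) ×
      (Fin N → EuclideanSpace ℝ (Fin 3)) => L p.1 p.2) (r t, u t) (u t, u' t)
      = ∑ α, (inner ℝ (u t α)
          (gradient (fun w => L (Function.update (r t) α w) (u t)) (r t α)) : ℝ)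
        + ∑ α, (inner ℝ (u' t α)
            (gradient (fun w => L (r t) (Function.update (u t) α w)) (u t α)) : ℝ) := by
    rw [RR_fderiv_decomp (u t) (u' t)]
    congr 1
    · exact Finset.sum_congr rfl fun α _ => by
        rw [← hGinner t α (u t α), real_inner_comm]
    · exact Finset.sum_congr rfl fun α _ => by
        rw [← hPinner t α (u' t α), real_inner_comm]
  rw [hDval]
  simp only [inner_add_right, real_inner_smul_right, inner_sum, Finset.sum_add_distrib]
  rw [← real_inner_self_eq_norm_sq]
  simp only [sum_inner, inner_sum, real_inner_smul_left, real_inner_smul_right]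
  ring_nf
  simp only [Finset.mul_sum, Finset.sum_mul, mul_add, Finset.sum_add_distrib]
  have hBC : (∑ x : Fin N, ∑ i : Fin N,
        e x * Real.pi⁻¹ * (e i * (inner ℝ (u t x) (u'' t i) : ℝ)) * (1 / 6))
      = ∑ x : Fin N, ∑ x_1 : Fin N,
        Real.pi⁻¹ * e x * e x_1 * (inner ℝ (u t x) (u'' t x_1) : ℝ) * (1 / 6) :=
    Finset.sum_congr rfl fun x _ => Finset.sum_congr rfl fun i _ => by ring
  have hAD : (∑ x : Fin N, ∑ i : Fin N,
        Real.pi⁻¹ * (e x * e i * (inner ℝ (u' t i) (u' t x) : ℝ)) * (-1 / 6))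
      = - ∑ x : Fin N, ∑ x_1 : Fin N,
        Real.pi⁻¹ * e x * e x_1 * (inner ℝ (u' t x) (u' t x_1) : ℝ) * (1 / 6) := by
    rw [Finset.sum_comm, ← Finset.sum_neg_distrib]
    refine Finset.sum_congr rfl fun a _ => ?_
    rw [← Finset.sum_neg_distrib]
    refine Finset.sum_congr rfl fun b _ => ?_
    ring
  linarith [hBC, hAD]
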